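/- If H is a finitely generated nilpotent group, then gap(H) = 0, i.e. the minimal number of ZH-module generators of the augmentation ideal ΔH equals the minimal number of group generators of H; moreover ΔH is a Swan module, and when H/H' is torsion free every prime is a ΔH-prime. -/

import Mathlib

noncomputable section

/-- The integral group ring ℤG. -/
abbrev ZG (G : Type*) [Group G] : Type _ := MonoidAlgebra ℤ G

/-- `dMod R M` is the minimal number of generators of `M` as an `R`-module. -/
def dMod (R M : Type*) [Ring R] [AddCommGroup M] [Module R M] : ℕ :=
  sInf {n | ∃ s : Finset M, s.card = n ∧ Submodule.span R (s : Set M) = ⊤}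

/-- The submodule `pM` of `M`. -/
def pMul (R M : Type*) [Ring R] [AddCommGroup M] [Module R M] (p : ℕ) : Submodule R M :=
  Submodule.span R {x : M | ∃ m : M, x = p • m}

/-- `dModP R M p` is the minimal number of generators of `M/pM` as an `R`-module. -/
def dModP (R M : Type*) [Ring R] [AddCommGroup M] [Module R M] (p : ℕ) : ℕ :=
  dMod R (M ⧸ pMul R M p)

/-- Minimal number of generators of the group `G`. -/
def dGrp (G : Type*) [Group G] : ℕ :=
  sInf {n | ∃ s : Finset G, s.card = n ∧ Subgroup.closure (s : Set G) = ⊤}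

/-- The augmentation ideal ΔG of ℤG: the kernel of the augmentation map ℤG → ℤ. -/
def aug (G : Type*) [Group G] : Ideal (ZG G) :=
  RingHom.ker ((MonoidAlgebra.lift ℤ ℤ G (1 : G →* ℤ)) : ZG G →ₐ[ℤ] ℤ).toRingHom

/-- `d_G(ΔG)`, minimal number of ℤG-module generators of the augmentation ideal. -/
def dAug (G : Type*) [Group G] : ℕ := dMod (ZG G) (aug G)

/-- `d_G(ΔG/pΔG)`. -/
def dAugP (G : Type*) [Group G] (p : ℕ) : ℕ := dModP (ZG G) (aug G) p

/-- The generation gap `gap(G) = d(G) - d_G(ΔG)` (as an integer). -/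
def gapZ (G : Type*) [Group G] : ℤ := (dGrp G : ℤ) - (dAug G : ℤ)

/-- `p` is a ΔG-prime: a prime with `d_G(ΔG) = d_G(ΔG/pΔG)`. -/
def IsAugPrime (G : Type*) [Group G] (p : ℕ) : Prop := p.Prime ∧ dAug G = dAugP G p

/-- ΔG is a Swan module: some prime is a ΔG-prime. -/
def AugSwan (G : Type*) [Group G] : Prop := ∃ p, IsAugPrime G p

/-- Torsion-free monoid (the removed Mathlib notion, with its old meaning). -/
def Monoid.IsTorsionFree (G : Type*) [Monoid G] : Prop := ∀ g : G, g ≠ 1 → ¬IsOfFinOrder g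

-- ### basic dMod / dGrp lemmas

section Basic
variable {R M : Type*} [Ring R] [AddCommGroup M] [Module R M]

lemma dMod_le (s : Finset M) (h : Submodule.span R (s : Set M) = ⊤) : dMod R M ≤ s.card :=
  Nat.sInf_le ⟨s, rfl, h⟩

lemma dMod_spec (h : ∃ s : Finset M, Submodule.span R (s : Set M) = ⊤) :
    ∃ s : Finset M, s.card = dMod R M ∧ Submodule.span R (s : Set M) = ⊤ := by
  obtain ⟨s, hs⟩ := h
  exact Nat.sInf_mem (⟨s.card, s, rfl, hs⟩ :
    Set.Nonempty {n | ∃ s : Finset M, s.card = n ∧ Submodule.span R (s : Set M) = ⊤})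

lemma dModP_le_dMod (p : ℕ) (h : ∃ s : Finset M, Submodule.span R (s : Set M) = ⊤) :
    dModP R M p ≤ dMod R M := by
  classical
  obtain ⟨s, hcard, hs⟩ := dMod_spec h
  have hsp : Submodule.span R ((s.image (pMul R M p).mkQ : Finset (M ⧸ pMul R M p)) :
      Set (M ⧸ pMul R M p)) = ⊤ := by
    rw [Finset.coe_image, Submodule.span_image, hs, Submodule.map_top, Submodule.range_mkQ]
  calc dModP R M p ≤ (s.image (pMul R M p).mkQ).card := dMod_le _ hsp
    _ ≤ s.card := Finset.card_image_le
    _ = dMod R M := hcard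

lemma span_subtype_top_iff (N : Submodule R M) (s : Finset N) :
    Submodule.span R (s : Set N) = ⊤ ↔ Submodule.span R (N.subtype '' (s : Set N)) = N := by
  rw [Submodule.span_image]
  constructor
  · intro h; rw [h, Submodule.map_subtype_top]
  · intro h
    apply Submodule.map_injective_of_injective N.injective_subtype
    rw [h, Submodule.map_subtype_top]

end Basic

lemma dGrp_le {G : Type*} [Group G] (s : Finset G) (h : Subgroup.closure (s : Set G) = ⊤) :
    dGrp G ≤ s.card :=
  Nat.sInf_le ⟨s, rfl, h⟩

lemma dGrp_spec {G : Type*} [Group G] (h : Group.FG G) :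
    ∃ s : Finset G, s.card = dGrp G ∧ Subgroup.closure (s : Set G) = ⊤ := by
  obtain ⟨s, hs⟩ := h.out
  exact Nat.sInf_mem (⟨s.card, s, rfl, hs⟩ :
    Set.Nonempty {n | ∃ s : Finset G, s.card = n ∧ Subgroup.closure (s : Set G) = ⊤})

-- ### augmentation

section Aug
variable (G : Type*) [Group G]

def augE : ZG G →+* ℤ :=
  ((MonoidAlgebra.lift ℤ ℤ G (1 : G →* ℤ)) : ZG G →ₐ[ℤ] ℤ).toRingHom

lemma mem_aug {x : ZG G} : x ∈ aug G ↔ augE G x = 0 := Iff.rfl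

lemma augE_single (g : G) (a : ℤ) : augE G (MonoidAlgebra.single g a) = a := by
  simp [augE, MonoidAlgebra.lift_single]

lemma augE_apply (x : ZG G) : augE G x = ∑ g ∈ x.coeff.support, x.coeff g := by
  rw [augE]; rw [AlgHom.toRingHom_eq_coe, RingHom.coe_coe, MonoidAlgebra.lift_apply]
  simp [Finsupp.sum]

lemma finsupp_sum_single_smul {α : Type*} (x : α →₀ ℤ) :
    ∑ a ∈ x.support, x a • Finsupp.single a (1 : ℤ) = x := by
  conv_rhs => rw [← Finsupp.sum_single x]
  rw [Finsupp.sum]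
  refine Finset.sum_congr rfl fun a _ => ?_
  rw [Finsupp.smul_single, smul_eq_mul, mul_one]

lemma monoidAlgebra_sum_single_smul {α : Type*} [Monoid α] (x : MonoidAlgebra ℤ α) :
    ∑ a ∈ x.coeff.support, x.coeff a • MonoidAlgebra.single a (1 : ℤ) = x := by
  conv_rhs => rw [← MonoidAlgebra.sum_coeff_single x]
  rw [Finsupp.sum]
  refine Finset.sum_congr rfl fun a _ => ?_
  rw [MonoidAlgebra.smul_single, smul_eq_mul, mul_one]

lemma single_sub_one_mem_aug (g : G) : MonoidAlgebra.single g (1 : ℤ) - 1 ∈ aug G := by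
  rw [mem_aug, map_sub, augE_single, map_one, sub_self]

lemma single_sub_one_mem_span (s : Finset G) (hs : Subgroup.closure (s : Set G) = ⊤) (g : G) :
    MonoidAlgebra.single g (1:ℤ) - 1 ∈
      Submodule.span (ZG G) ((fun g => MonoidAlgebra.single g (1:ℤ) - 1) '' (s : Set G)) := by
  have hg : g ∈ Subgroup.closure (s : Set G) := hs ▸ Subgroup.mem_top g
  induction hg using Subgroup.closure_induction with
  | mem x hx => exact Submodule.subset_span ⟨x, hx, rfl⟩
  | one => rw [MonoidAlgebra.one_def]; simp
  | mul x y _ _ ihx ihy =>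
      have hxy : (MonoidAlgebra.single (x*y) (1:ℤ) : ZG G) - 1 =
          MonoidAlgebra.single x (1:ℤ) * (MonoidAlgebra.single y (1:ℤ) - 1) +
            (MonoidAlgebra.single x (1:ℤ) - 1) := by
        rw [mul_sub, MonoidAlgebra.single_mul_single, mul_one, mul_one]; abel
      rw [hxy]
      refine add_mem ?_ ihx
      have := Submodule.smul_mem _ (MonoidAlgebra.single x (1:ℤ)) ihy
      rwa [smul_eq_mul] at this
  | inv x _ ihx =>
      have hxi : (MonoidAlgebra.single x⁻¹ (1:ℤ) : ZG G) - 1 =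
          -(MonoidAlgebra.single x⁻¹ (1:ℤ) * (MonoidAlgebra.single x (1:ℤ) - 1)) := by
        have h2 : (MonoidAlgebra.single x⁻¹ (1:ℤ) : ZG G) * (MonoidAlgebra.single x (1:ℤ) - 1)
            = 1 - MonoidAlgebra.single x⁻¹ (1:ℤ) := by
          rw [mul_sub, MonoidAlgebra.single_mul_single, one_mul, inv_mul_cancel,
            ← MonoidAlgebra.one_def, mul_one]
        rw [h2]; abel
      rw [hxi]
      refine neg_mem ?_
      have := Submodule.smul_mem _ (MonoidAlgebra.single x⁻¹ (1:ℤ)) ihx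
      rwa [smul_eq_mul] at this

lemma aug_eq_span (s : Finset G) (hs : Subgroup.closure (s : Set G) = ⊤) :
    aug G = Submodule.span (ZG G) ((fun g => MonoidAlgebra.single g (1:ℤ) - 1) '' (s : Set G)) := by
  apply le_antisymm
  · intro x hx
    have hrep : x = ∑ g ∈ x.coeff.support, x.coeff g • (MonoidAlgebra.single g (1:ℤ) - 1) := by
      have h1 : ∑ g ∈ x.coeff.support, x.coeff g • (MonoidAlgebra.single g (1:ℤ) - 1)
          = (∑ g ∈ x.coeff.support, x.coeff g • MonoidAlgebra.single g (1:ℤ)) -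
            (∑ g ∈ x.coeff.support, x.coeff g) • (1 : ZG G) := by
        rw [Finset.sum_smul, ← Finset.sum_sub_distrib]
        refine Finset.sum_congr rfl fun g _ => ?_
        rw [smul_sub]
      rw [h1, monoidAlgebra_sum_single_smul, ← augE_apply, (mem_aug G).mp hx]
      simp
    rw [hrep]
    exact Submodule.sum_mem _ fun g _ =>
      Submodule.smul_of_tower_mem _ _ (single_sub_one_mem_span G s hs g)
  · rw [Submodule.span_le]
    rintro _ ⟨g, _, rfl⟩
    exact single_sub_one_mem_aug G g

set_option maxHeartbeats 1000000 in
lemma exists_aug_span (s : Finset G) (hs : Subgroup.closure (s : Set G) = ⊤) :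
    ∃ t : Finset (aug G), t.card ≤ s.card ∧
      Submodule.span (ZG G) (t : Set (aug G)) = ⊤ := by
  classical
  refine ⟨s.image (fun g => (⟨MonoidAlgebra.single g (1:ℤ) - 1,
    single_sub_one_mem_aug G g⟩ : aug G)), Finset.card_image_le, ?_⟩
  rw [span_subtype_top_iff]
  rw [Finset.coe_image, ← Set.image_comp]
  show Submodule.span (ZG G) ((fun g => MonoidAlgebra.single g (1:ℤ) - 1) '' ↑s) = aug G
  exact (aug_eq_span G s hs).symm

lemma aug_fg {G : Type*} [Group G] (h : Group.FG G) :
    ∃ t : Finset (aug G), Submodule.span (ZG G) (t : Set (aug G)) = ⊤ := by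
  obtain ⟨s, hs⟩ := h.out
  obtain ⟨t, _, ht⟩ := exists_aug_span G s hs
  exact ⟨t, ht⟩

lemma dAug_le_dGrp {G : Type*} [Group G] (h : Group.FG G) : dAug G ≤ dGrp G := by
  obtain ⟨s, hcard, hs⟩ := dGrp_spec h
  obtain ⟨t, htc, ht⟩ := exists_aug_span G s hs
  calc dAug G ≤ t.card := dMod_le t ht
    _ ≤ s.card := htc
    _ = dGrp G := hcard

lemma dAugP_le_dAug {G : Type*} [Group G] (h : Group.FG G) (p : ℕ) : dAugP G p ≤ dAug G :=
  dModP_le_dMod p (aug_fg h)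

end Aug

-- ### the map phi : ZG →+ Additive (Abelianization G)

section Phi
variable (G : Type*) [Group G]

def phi : ZG G →+ Additive (Abelianization G) :=
  (Finsupp.liftAddHom fun g => zmultiplesHom _ (Additive.ofMul (Abelianization.of g))).comp
    MonoidAlgebra.coeffAddEquiv.toAddMonoidHom

lemma phi_single (g : G) (a : ℤ) :
    phi G (MonoidAlgebra.single g a) = a • Additive.ofMul (Abelianization.of g) := by
  exact Finsupp.liftAddHom_apply_single
    (fun g => zmultiplesHom _ (Additive.ofMul (Abelianization.of g))) g a

lemma phi_single_one_mul (g : G) (x : ZG G) :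
    phi G (MonoidAlgebra.single g 1 * x)
      = augE G x • Additive.ofMul (Abelianization.of g) + phi G x := by
  have hext : (phi G).comp (AddMonoidHom.mulLeft (MonoidAlgebra.single g (1:ℤ)))
      = ((zmultiplesHom _ (Additive.ofMul (Abelianization.of g))).comp
          (augE G).toAddMonoidHom) + phi G := by
    apply MonoidAlgebra.addMonoidHom_ext
    intro h a
    simp only [AddMonoidHom.coe_comp, Function.comp_apply, AddMonoidHom.coe_mulLeft,
      AddMonoidHom.add_apply, RingHom.toAddMonoidHom_eq_coe, AddMonoidHom.coe_coe]
    show phi G (MonoidAlgebra.single g 1 * MonoidAlgebra.single h a)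
      = augE G (MonoidAlgebra.single h a) • Additive.ofMul (Abelianization.of g)
        + phi G (MonoidAlgebra.single h a)
    rw [MonoidAlgebra.single_mul_single, one_mul, phi_single, phi_single, augE_single]
    have : Additive.ofMul (Abelianization.of (g * h))
        = Additive.ofMul (Abelianization.of g) + Additive.ofMul (Abelianization.of h) := by
      rw [map_mul]; rfl
    rw [this, smul_add]
  have := congrArg (fun F => F x) hext
  simpa using this

lemma phi_mul (c x : ZG G) (hx : x ∈ aug G) : phi G (c * x) = augE G c • phi G x := by
  have hext : (phi G).comp (AddMonoidHom.mulRight x)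
      = (zmultiplesHom _ (phi G x)).comp (augE G).toAddMonoidHom := by
    apply MonoidAlgebra.addMonoidHom_ext
    intro g a
    simp only [AddMonoidHom.coe_comp, Function.comp_apply, AddMonoidHom.coe_mulRight,
      RingHom.toAddMonoidHom_eq_coe, AddMonoidHom.coe_coe]
    show phi G (MonoidAlgebra.single g a * x) = augE G (MonoidAlgebra.single g a) • phi G x
    have hsingle : (MonoidAlgebra.single g a : ZG G) = a • MonoidAlgebra.single g 1 := by
      rw [MonoidAlgebra.smul_single, smul_eq_mul, mul_one]
    rw [hsingle, smul_mul_assoc, map_zsmul, phi_single_one_mul,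
      (mem_aug G).mp hx, map_zsmul, augE_single]
    simp
  have := congrArg (fun F => F c) hext
  simpa using this

lemma phi_surj (a : Abelianization G) :
    ∃ x : ZG G, x ∈ aug G ∧ phi G x = Additive.ofMul a := by
  obtain ⟨h, rfl⟩ := Quot.exists_rep a
  rw [Abelianization.mk_eq_of]
  refine ⟨MonoidAlgebra.single h 1 - 1, single_sub_one_mem_aug G h, ?_⟩
  rw [map_sub, MonoidAlgebra.one_def, phi_single, phi_single, one_zsmul, one_zsmul]
  have : Additive.ofMul (Abelianization.of (1 : G)) = 0 := by rw [map_one]; rfl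
  rw [this, sub_zero]

end Phi

-- ### Frattini argument for nilpotent groups

open scoped commutatorElement in
lemma commutator_le_of_sup_center {Q : Type*} [Group Q] (K : Subgroup Q)
    (h : K ⊔ Subgroup.center Q = ⊤) : commutator Q ≤ K := by
  have conj : ∀ k z a : Q, (∀ g, g * z = z * g) → (k*z)*a*(k*z)⁻¹ = k*a*k⁻¹ := by
    intro k z a hz
    have h1 : (k*z)*a*(k*z)⁻¹ = k*(z*a)*z⁻¹*k⁻¹ := by rw [mul_inv_rev]; group
    rw [h1, ← hz a]; group
  rw [commutator_def, Subgroup.commutator_le]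
  intro x _ y _
  have hx : x ∈ K ⊔ Subgroup.center Q := h ▸ Subgroup.mem_top x
  have hy : y ∈ K ⊔ Subgroup.center Q := h ▸ Subgroup.mem_top y
  rw [← SetLike.mem_coe, Subgroup.mul_normal] at hx hy
  obtain ⟨k₁, hk₁, z₁, hz₁, rfl⟩ := hx
  obtain ⟨k₂, hk₂, z₂, hz₂, rfl⟩ := hy
  have hz₁' : ∀ g : Q, g * z₁ = z₁ * g := fun g => Subgroup.mem_center_iff.mp hz₁ g
  have hz₂' : ∀ g : Q, g * z₂ = z₂ * g := fun g => Subgroup.mem_center_iff.mp hz₂ g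
  have key : ⁅k₁ * z₁, k₂ * z₂⁆ = ⁅k₁, k₂⁆ := by
    calc ⁅k₁*z₁, k₂*z₂⁆ = (k₁*z₁)*(k₂*z₂)*(k₁*z₁)⁻¹*(k₂*z₂)⁻¹ := commutatorElement_def _ _
      _ = (k₁*(k₂*z₂)*k₁⁻¹)*(k₂*z₂)⁻¹ := by rw [conj k₁ z₁ (k₂*z₂) hz₁']
      _ = k₁*k₂*(z₂*k₁⁻¹)*(z₂⁻¹*k₂⁻¹) := by rw [mul_inv_rev]; group
      _ = k₁*k₂*(k₁⁻¹*z₂)*(z₂⁻¹*k₂⁻¹) := by rw [← hz₂' k₁⁻¹]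
      _ = k₁*k₂*k₁⁻¹*k₂⁻¹ := by group
      _ = ⁅k₁,k₂⁆ := (commutatorElement_def _ _).symm
  rw [key, commutatorElement_def]
  exact mul_mem (mul_mem (mul_mem hk₁ hk₂) (inv_mem hk₁)) (inv_mem hk₂)

lemma eq_top_of_sup_commutator {G : Type*} [Group G] [Group.IsNilpotent G] (K : Subgroup G)
    (h : K ⊔ commutator G = ⊤) : K = ⊤ := by
  obtain ⟨n, hn⟩ := nilpotent_iff_lowerCentralSeries.mp ‹_›
  suffices hsuff : ∀ m, K ⊔ Subgroup.lowerCentralSeries (⊤ : Subgroup G) m = ⊤ by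
    have := hsuff n
    rwa [hn, sup_bot_eq] at this
  intro m
  induction m with
  | zero => rw [Subgroup.lowerCentralSeries_zero]; exact sup_top_eq K
  | succ m ih =>
    set N := Subgroup.lowerCentralSeries (⊤ : Subgroup G) (m+1) with hNdef
    haveI hN : N.Normal := inferInstance
    set π := QuotientGroup.mk' N with hπdef
    have hπ : Function.Surjective π := QuotientGroup.mk'_surjective N
    have hcen : Subgroup.map π (Subgroup.lowerCentralSeries (⊤ : Subgroup G) m) ≤ Subgroup.center (G ⧸ N) := by
      rintro _ ⟨x, hx, rfl⟩
      rw [Subgroup.mem_center_iff]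
      intro q
      obtain ⟨y, rfl⟩ := hπ q
      rw [← map_mul, ← map_mul]
      symm
      show (QuotientGroup.mk (x*y) : G ⧸ N) = QuotientGroup.mk (y*x)
      apply (QuotientGroup.eq_iff_div_mem).mpr
      show x*y/(y*x) ∈ Subgroup.lowerCentralSeries (⊤ : Subgroup G) (m+1)
      rw [Subgroup.mem_lowerCentralSeries_succ_iff]
      exact Subgroup.subset_closure ⟨x, hx, y, Subgroup.mem_top y,
        by rw [commutatorElement_def, div_eq_mul_inv, mul_inv_rev, ← mul_assoc]⟩
    have hKm : Subgroup.map π K ⊔ Subgroup.map π (Subgroup.lowerCentralSeries (⊤ : Subgroup G) m) = ⊤ := by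
      rw [← Subgroup.map_sup, ih]
      exact Subgroup.map_top_of_surjective π hπ
    have hsupc : Subgroup.map π K ⊔ Subgroup.center (G ⧸ N) = ⊤ :=
      eq_top_iff.mpr (by rw [← hKm]; exact sup_le_sup_left hcen _)
    have hcomm : commutator (G ⧸ N) ≤ Subgroup.map π K :=
      commutator_le_of_sup_center _ hsupc
    have h2 : Subgroup.map π K ⊔ commutator (G ⧸ N) = ⊤ := by
      have h3 : commutator (G ⧸ N) = Subgroup.map π (commutator G) := by
        rw [commutator_def, commutator_def, Subgroup.map_commutator,
          Subgroup.map_top_of_surjective π hπ]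
      rw [h3, ← Subgroup.map_sup, h, Subgroup.map_top_of_surjective π hπ]
    have hmapK : Subgroup.map π K = ⊤ := by
      have h4 : Subgroup.map π K ⊔ commutator (G ⧸ N) ≤ Subgroup.map π K :=
        sup_le (le_refl _) hcomm
      rw [h2] at h4
      exact eq_top_iff.mpr h4
    have h5 := Subgroup.comap_map_eq π K
    rw [hmapK, Subgroup.comap_top] at h5
    rw [h5]
    congr 1
    exact (QuotientGroup.ker_mk' N).symm

-- ### from generators of the abelianization to generators of G

lemma mult_closure_of_add {Q : Type*} [Group Q] (S : Set (Additive Q))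
    (h : AddSubgroup.closure S = ⊤) :
    Subgroup.closure (Additive.toMul '' S) = ⊤ := by
  rw [eq_top_iff]
  intro x _
  have hx : Additive.ofMul x ∈ AddSubgroup.closure S := h ▸ AddSubgroup.mem_top _
  have key : ∀ a ∈ AddSubgroup.closure S,
      Additive.toMul a ∈ Subgroup.closure (Additive.toMul '' S) := by
    intro a ha
    induction ha using AddSubgroup.closure_induction with
    | mem s hs => exact Subgroup.subset_closure ⟨s, hs, rfl⟩
    | zero => exact Subgroup.one_mem _
    | add a b _ _ iha ihb => exact Subgroup.mul_mem _ iha ihb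
    | neg a _ iha => exact Subgroup.inv_mem _ iha
  exact key _ hx

lemma dGrp_le_of_abelianization_gens {G : Type*} [Group G] [Group.IsNilpotent G]
    (t : Finset (Abelianization G)) (ht : Subgroup.closure (t : Set (Abelianization G)) = ⊤) :
    dGrp G ≤ t.card := by
  classical
  have hrep : ∀ a : Abelianization G, ∃ x : G, Abelianization.of x = a := by
    intro a
    obtain ⟨x, hx⟩ := Quot.exists_rep a
    exact ⟨x, by rw [← Abelianization.mk_eq_of]; exact hx⟩
  choose f hf using hrep
  set t' := t.image f with ht'
  have hsub : (t : Set (Abelianization G)) ⊆ Abelianization.of '' (t' : Set G) := by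
    intro a ha
    exact ⟨f a, by simp [ht', Finset.mem_coe.mp ha, Finset.coe_image]; exact ⟨a, ha, rfl⟩, hf a⟩
  have hmap : Subgroup.map Abelianization.of (Subgroup.closure (t' : Set G)) = ⊤ := by
    rw [MonoidHom.map_closure, eq_top_iff, ← ht]
    exact Subgroup.closure_mono hsub
  have hker : (Abelianization.of (G := G)).ker = commutator G := by
    ext x
    rw [MonoidHom.mem_ker]
    exact QuotientGroup.eq_one_iff x
  have hsup : Subgroup.closure (t' : Set G) ⊔ commutator G = ⊤ := by
    have := Subgroup.comap_map_eq Abelianization.of (Subgroup.closure (t' : Set G))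
    rw [hmap, Subgroup.comap_top, hker] at this
    exact this.symm
  have := eq_top_of_sup_commutator _ hsup
  calc dGrp G ≤ t'.card := dGrp_le t' this
    _ ≤ t.card := Finset.card_image_le

open scoped DirectSum

-- ### filtering trivial components out of a direct sum

def filterEquiv {ι : Type} [DecidableEq ι] (M : ι → Type) [∀ i, AddCommMonoid (M i)]
    (P : ι → Prop) [DecidablePred P] (hP : ∀ i, ¬ P i → Subsingleton (M i)) :
    (⨁ i, M i) ≃+ ⨁ (j : {i // P i}), M j.1 := by
  classical
  refine AddMonoidHom.toAddEquiv
    (DirectSum.toAddMonoid fun i =>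
      if h : P i then DirectSum.of (fun j : {i // P i} => M j.1) ⟨i, h⟩ else 0)
    (DirectSum.toAddMonoid fun j => DirectSum.of M j.1) ?_ ?_
  · apply DirectSum.addHom_ext
    intro i x
    simp only [AddMonoidHom.coe_comp, Function.comp_apply, DirectSum.toAddMonoid_of,
      AddMonoidHom.id_apply]
    by_cases h : P i
    · rw [dif_pos h, DirectSum.toAddMonoid_of]
    · rw [dif_neg h]
      haveI := hP i h
      have : x = 0 := Subsingleton.elim x 0
      rw [this, map_zero]
      simp
  · apply DirectSum.addHom_ext
    rintro ⟨i, h⟩ x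
    simp only [AddMonoidHom.coe_comp, Function.comp_apply, DirectSum.toAddMonoid_of,
      AddMonoidHom.id_apply]
    rw [dif_pos h]

-- ### slot function

lemma exists_slot {ι : Type} [Fintype ι] [DecidableEq ι] (q : ι → ℕ) (k : ℕ)
    (hk : ∀ i, (Finset.univ.filter fun j => q j = q i).card ≤ k) :
    ∃ slot : ι → Fin k, ∀ i j, q i = q j → slot i = slot j → i = j := by
  classical
  let idx := Fintype.equivFin ι
  let rank : ι → ℕ := fun i => (Finset.univ.filter fun j => q j = q i ∧ idx j < idx i).card
  have hrank : ∀ i, rank i < k := by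
    intro i
    have h1 : (Finset.univ.filter fun j => q j = q i ∧ idx j < idx i) ⊆
        (Finset.univ.filter fun j => q j = q i).erase i := by
      intro j hj
      simp only [Finset.mem_filter, Finset.mem_univ, true_and] at hj
      refine Finset.mem_erase.mpr ⟨?_, by simp [hj.1]⟩
      intro hji; subst hji; exact lt_irrefl _ hj.2
    calc rank i ≤ ((Finset.univ.filter fun j => q j = q i).erase i).card :=
          Finset.card_le_card h1
      _ < (Finset.univ.filter fun j => q j = q i).card :=
          Finset.card_erase_lt_of_mem (by simp)
      _ ≤ k := hk i
  have hmono : ∀ i j, q i = q j → idx i < idx j → rank i < rank j := by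
    intro i j hq hij
    have hsub : insert i (Finset.univ.filter fun l => q l = q i ∧ idx l < idx i) ⊆
        (Finset.univ.filter fun l => q l = q j ∧ idx l < idx j) := by
      intro l hl
      rcases Finset.mem_insert.mp hl with rfl | hl
      · simp [hq.symm ▸ hq, hij]; exact hq
      · simp only [Finset.mem_filter, Finset.mem_univ, true_and] at hl ⊢
        exact ⟨hq ▸ hl.1, lt_trans hl.2 hij⟩
    have hnotmem : i ∉ (Finset.univ.filter fun l => q l = q i ∧ idx l < idx i) := by
      simp
    calc rank i < rank i + 1 := Nat.lt_succ_self _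
      _ = (insert i (Finset.univ.filter fun l => q l = q i ∧ idx l < idx i)).card := by
          rw [Finset.card_insert_of_notMem hnotmem]
      _ ≤ rank j := Finset.card_le_card hsub
  refine ⟨fun i => ⟨rank i, hrank i⟩, fun i j hq hs => ?_⟩
  by_contra hne
  have hidx : idx i ≠ idx j := fun h => hne (idx.injective h)
  have hrs : rank i = rank j := by
    simpa [Fin.ext_iff] using hs
  rcases lt_or_gt_of_ne hidx with h | h
  · exact absurd hrs (Nat.ne_of_lt (hmono i j hq h))
  · exact absurd hrs.symm (Nat.ne_of_lt (hmono j i hq.symm h))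

-- ### generating the decomposed group by n + k elements

open scoped DirectSum

lemma gen_bound {ι : Type} [Fintype ι] [DecidableEq ι] (q kexp : ι → ℕ)
    (hq : ∀ i, (q i).Prime) (n k : ℕ) (slot : ι → Fin k)
    (hslot : ∀ i j, q i = q j → slot i = slot j → i = j) :
    ∃ u : Finset ((Fin n →₀ ℤ) × ⨁ i, ZMod (q i ^ kexp i)),
      u.card ≤ n + k ∧ AddSubgroup.closure (u : Set ((Fin n →₀ ℤ) × ⨁ i, ZMod (q i ^ kexp i))) = ⊤ := by
  classical
  set T := ⨁ i, ZMod (q i ^ kexp i) with hT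
  haveI : ∀ i, NeZero (q i ^ kexp i) := fun i => ⟨pow_ne_zero _ (hq i).ne_zero⟩
  let y : Fin k → T := fun j =>
    ∑ i ∈ Finset.univ.filter (fun i => slot i = j),
      DirectSum.of (fun i => ZMod (q i ^ kexp i)) i 1
  let u1 : Finset ((Fin n →₀ ℤ) × T) :=
    Finset.univ.image (fun i : Fin n => (Finsupp.single i (1:ℤ), (0 : T)))
  let u2 : Finset ((Fin n →₀ ℤ) × T) :=
    Finset.univ.image (fun j : Fin k => ((0 : Fin n →₀ ℤ), y j))
  refine ⟨u1 ∪ u2, ?_, ?_⟩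
  · calc (u1 ∪ u2).card ≤ u1.card + u2.card := Finset.card_union_le _ _
      _ ≤ n + k := by
        refine Nat.add_le_add (le_trans Finset.card_image_le (by simp))
          (le_trans Finset.card_image_le (by simp))
  · rw [eq_top_iff]
    rintro ⟨x1, x2⟩ -
    set C := AddSubgroup.closure ((u1 ∪ u2 : Finset ((Fin n →₀ ℤ) × T)) :
      Set ((Fin n →₀ ℤ) × T)) with hC
    have hfree : ((x1, (0:T)) : (Fin n →₀ ℤ) × T) ∈ C := by
      have hx1 : ((x1, (0:T)) : (Fin n →₀ ℤ) × T)
          = ∑ i ∈ x1.support, x1 i • ((Finsupp.single i (1:ℤ)), (0:T)) := by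
        have hfst := finsupp_sum_single_smul x1
        apply Prod.ext
        · rw [Prod.fst_sum]; simpa using hfst.symm
        · rw [Prod.snd_sum]; simp
      rw [hx1]
      refine AddSubgroup.sum_mem _ fun i hi => AddSubgroup.zsmul_mem _
        (AddSubgroup.subset_closure ?_) _
      refine Finset.mem_union_left _ ?_
      exact Finset.mem_image.mpr ⟨i, Finset.mem_univ i, rfl⟩
    have hof : ∀ i : ι,
        ((0 : Fin n →₀ ℤ), DirectSum.of (fun i => ZMod (q i ^ kexp i)) i 1) ∈ C := by
      intro i
      set S := Finset.univ.filter (fun i' => slot i' = slot i) with hS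
      have hiS : i ∈ S := by simp [hS]
      set M := ∏ i' ∈ S.erase i, q i' ^ kexp i' with hM
      have hqne : ∀ i' ∈ S.erase i, q i' ≠ q i := by
        intro i' hi' hqq
        have hsl : slot i' = slot i := by
          have := (Finset.mem_erase.mp hi').2
          simpa [hS] using this
        exact (Finset.mem_erase.mp hi').1 (hslot i' i hqq hsl)
      have hcop : M.Coprime (q i ^ kexp i) := Nat.Coprime.prod_left fun i' hi' =>
        Nat.Coprime.pow _ _ ((Nat.coprime_primes (hq i') (hq i)).mpr (hqne i' hi'))
      obtain ⟨w, hw⟩ := (ZMod.isUnit_iff_coprime M (q i ^ kexp i)).mpr hcop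
      set c := M * ZMod.val ((w⁻¹ : (ZMod (q i ^ kexp i))ˣ) : ZMod (q i ^ kexp i)) with hc
      have hc1 : ((c : ℕ) : ZMod (q i ^ kexp i)) = 1 := by
        rw [hc]
        push_cast
        rw [ZMod.natCast_rightInverse _, ← hw, Units.mul_inv]
      have hc0 : ∀ i' ∈ S.erase i, ((c:ℕ) : ZMod (q i' ^ kexp i')) = 0 := by
        intro i' hi'
        rw [ZMod.natCast_eq_zero_iff]
        exact dvd_mul_of_dvd_left (Finset.dvd_prod_of_mem _ hi') _
      have hy : c • ((0 : Fin n →₀ ℤ), y (slot i))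
          = ((0 : Fin n →₀ ℤ), DirectSum.of (fun i => ZMod (q i ^ kexp i)) i 1) := by
        apply Prod.ext
        · simp
        · show c • y (slot i) = _
          have hyS : y (slot i) = ∑ i' ∈ S, DirectSum.of (fun i => ZMod (q i ^ kexp i)) i' 1 := rfl
          rw [hyS, Finset.smul_sum]
          have hterm : ∀ i' ∈ S, c • DirectSum.of (fun i => ZMod (q i ^ kexp i)) i' 1
              = DirectSum.of (fun i => ZMod (q i ^ kexp i)) i' ((c:ℕ) : ZMod (q i' ^ kexp i')) := by
            intro i' _
            rw [← map_nsmul]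
            congr 1
            rw [nsmul_eq_mul, mul_one]
          rw [Finset.sum_congr rfl hterm]
          rw [Finset.sum_eq_single_of_mem i hiS]
          · rw [hc1]
          · intro i' hi' hne
            rw [hc0 i' (Finset.mem_erase.mpr ⟨hne, hi'⟩), map_zero]
      rw [← hy]
      refine AddSubgroup.nsmul_mem _ (AddSubgroup.subset_closure ?_) c
      refine Finset.mem_union_right _ ?_
      exact Finset.mem_image.mpr ⟨slot i, Finset.mem_univ _, rfl⟩
    have htor : ∀ x2 : T, ((0 : Fin n →₀ ℤ), x2) ∈ C := by
      intro x2
      refine DirectSum.induction_on x2 ?_ ?_ ?_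
      · exact C.zero_mem
      · intro i x
        have hx : DirectSum.of (fun i => ZMod (q i ^ kexp i)) i x
            = ZMod.val x • DirectSum.of (fun i => ZMod (q i ^ kexp i)) i 1 := by
          rw [← map_nsmul]
          congr 1
          rw [nsmul_eq_mul, mul_one, ZMod.natCast_rightInverse _]
        have hmem := AddSubgroup.nsmul_mem C (hof i) (ZMod.val x)
        have heq : ZMod.val x • ((0 : Fin n →₀ ℤ),
            DirectSum.of (fun i => ZMod (q i ^ kexp i)) i 1)
            = ((0 : Fin n →₀ ℤ), DirectSum.of (fun i => ZMod (q i ^ kexp i)) i x) := by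
          apply Prod.ext
          · simp
          · show ZMod.val x • DirectSum.of (fun i => ZMod (q i ^ kexp i)) i 1 = _
            exact hx.symm
        rwa [heq] at hmem
      · intro a b ha hb
        have := add_mem ha hb
        simpa using this
    have := add_mem hfree (htor x2)
    simpa using this

-- ### counting lemma

lemma finrank_le_dAugP {H : Type} [Group H] (hH : Group.FG H) (p : ℕ) [Fact p.Prime]
    (V : Type) [AddCommGroup V] [Module (ZMod p) V]
    (ψ : (aug H) →+ V) (hsurj : Function.Surjective ψ)
    (hsemi : ∀ (c : ZG H) (x : aug H), ψ (c • x) = augE H c • ψ x) :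
    Module.finrank (ZMod p) V ≤ dAugP H p := by
  classical
  set P := pMul (ZG H) (aug H) p with hPdef
  obtain ⟨t0, ht0⟩ := aug_fg hH
  have hfgQ : ∃ s : Finset ((aug H) ⧸ P), Submodule.span (ZG H) (s : Set ((aug H) ⧸ P)) = ⊤ := by
    refine ⟨t0.image P.mkQ, ?_⟩
    rw [Finset.coe_image, Submodule.span_image, ht0, Submodule.map_top, Submodule.range_mkQ]
  obtain ⟨s, hscard, hstop⟩ := dMod_spec hfgQ
  choose g hg using fun z : (aug H) ⧸ P => P.mkQ_surjective z
  set s' : Finset (aug H) := s.image g with hs'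
  have hss : (s : Set ((aug H) ⧸ P)) ⊆ P.mkQ '' (s' : Set (aug H)) := by
    intro z hz
    exact ⟨g z, by rw [hs', Finset.coe_image]; exact ⟨z, hz, rfl⟩, hg z⟩
  have hcover : ∀ x : aug H, x ∈ Submodule.span (ZG H) (s' : Set (aug H)) ⊔ P := by
    intro x
    have h1 : P.mkQ x ∈ Submodule.span (ZG H) (P.mkQ '' (s' : Set (aug H))) := by
      have h2 : P.mkQ x ∈ Submodule.span (ZG H) (s : Set ((aug H) ⧸ P)) := by
        rw [hstop]; exact Submodule.mem_top
      exact Submodule.span_mono hss h2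
    rw [Submodule.span_image] at h1
    obtain ⟨x', hx', hxx⟩ := h1
    have hsub : x - x' ∈ P := by
      have : P.mkQ (x - x') = 0 := by rw [map_sub, hxx, sub_self]
      rwa [Submodule.mkQ_apply, Submodule.Quotient.mk_eq_zero] at this
    refine Submodule.mem_sup.mpr ⟨x', hx', x - x', hsub, by abel⟩
  have hP0 : ∀ w ∈ P, ψ w = 0 := by
    intro w hw
    induction hw using Submodule.span_induction with
    | mem w hwm =>
        obtain ⟨m, rfl⟩ := hwm
        rw [map_nsmul]
        calc p • ψ m = ((p : ℕ) : ZMod p) • ψ m := (Nat.cast_smul_eq_nsmul _ _ _).symm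
          _ = 0 := by rw [ZMod.natCast_self, zero_smul]
    | zero => exact map_zero ψ
    | add a b _ _ iha ihb => rw [map_add, iha, ihb, add_zero]
    | smul c w _ ih => rw [hsemi c w, ih, smul_zero]
  have hVtop : Submodule.span (ZMod p) ((s'.image ψ : Finset V) : Set V) = ⊤ := by
    rw [eq_top_iff]
    intro v _
    obtain ⟨x, rfl⟩ := hsurj v
    obtain ⟨x', hx', w, hw, hxw⟩ := Submodule.mem_sup.mp (hcover x)
    have hxdec : ψ x = ψ x' := by
      rw [← hxw, map_add, hP0 w hw, add_zero]
    rw [hxdec]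
    clear hxdec hxw
    induction hx' using Submodule.span_induction with
    | mem a ha =>
        refine Submodule.subset_span ?_
        rw [Finset.coe_image]
        exact ⟨a, ha, rfl⟩
    | zero => rw [map_zero]; exact Submodule.zero_mem _
    | add a b _ _ iha ihb => rw [map_add]; exact Submodule.add_mem _ iha ihb
    | smul c a _ iha =>
        rw [hsemi c a]
        exact AddSubgroup.zsmul_mem (Submodule.span (ZMod p)
          ((s'.image ψ : Finset V) : Set V)).toAddSubgroup iha _
  have hfr := finrank_span_finset_le_card (R := ZMod p) (s'.image ψ)
  rw [Set.finrank, hVtop, finrank_top] at hfr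
  calc Module.finrank (ZMod p) V ≤ (s'.image ψ).card := hfr
    _ ≤ s'.card := Finset.card_image_le
    _ ≤ s.card := Finset.card_image_le
    _ = dAugP H p := hscard

-- ### the mod-p lower bound

lemma lower_bound {H : Type} [Group H] (hH : Group.FG H)
    (n : ℕ) (ι : Type) [Fintype ι] [DecidableEq ι] (q kexp : ι → ℕ)
    (hq : ∀ i, (q i).Prime) (hke : ∀ i, kexp i ≠ 0)
    (e : Additive (Abelianization H) ≃+ (Fin n →₀ ℤ) × ⨁ i, ZMod (q i ^ kexp i))
    (p : ℕ) (hp : p.Prime) :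
    n + Fintype.card {i // q i = p} ≤ dAugP H p := by
  classical
  haveI : Fact p.Prime := ⟨hp⟩
  have hdvd : ∀ j : {i // q i = p}, p ∣ q j.1 ^ kexp j.1 := by
    intro j
    conv_lhs => rw [← j.2]
    exact dvd_pow_self _ (hke j.1)
  let ρfun : ((Fin n →₀ ℤ) × ⨁ i, ZMod (q i ^ kexp i)) → ((Fin n ⊕ {i // q i = p}) → ZMod p) :=
    fun z => Sum.elim (fun i => ((z.1 i : ℤ) : ZMod p))
      (fun j => ZMod.castHom (hdvd j) (ZMod p) (z.2 j.1))
  have hadd : ∀ a b, ρfun (a + b) = ρfun a + ρfun b := by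
    intro a b
    funext sj
    cases sj with
    | inl i => simp [ρfun]
    | inr j =>
        simp only [ρfun, Sum.elim_inr, Prod.snd_add, DirectSum.add_apply, map_add, Pi.add_apply]
  let ρ : ((Fin n →₀ ℤ) × ⨁ i, ZMod (q i ^ kexp i)) →+ ((Fin n ⊕ {i // q i = p}) → ZMod p) :=
    AddMonoidHom.mk' ρfun hadd
  haveI : ∀ i : ι, NeZero (q i ^ kexp i) := fun i => ⟨pow_ne_zero _ (hq i).ne_zero⟩
  have hρs : Function.Surjective ρ := by
    intro v
    refine ⟨(Finsupp.equivFunOnFinite.symm (fun i => ((v (Sum.inl i)).val : ℤ)),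
      ∑ j : {i // q i = p}, DirectSum.of (fun i => ZMod (q i ^ kexp i)) j.1
        (((v (Sum.inr j)).val : ZMod (q j.1 ^ kexp j.1)))), ?_⟩
    funext sj
    cases sj with
    | inl i =>
        show (((Finsupp.equivFunOnFinite.symm
          (fun i => ((v (Sum.inl i)).val : ℤ))) i : ℤ) : ZMod p) = v (Sum.inl i)
        rw [Finsupp.coe_equivFunOnFinite_symm]
        push_cast
        exact ZMod.natCast_rightInverse _
    | inr j =>
        show ZMod.castHom (hdvd j) (ZMod p)
          ((∑ j' : {i // q i = p}, DirectSum.of (fun i => ZMod (q i ^ kexp i)) j'.1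
            (((v (Sum.inr j')).val : ZMod (q j'.1 ^ kexp j'.1)))) j.1) = v (Sum.inr j)
        rw [DFinsupp.finset_sum_apply]
        rw [Finset.sum_eq_single_of_mem j (Finset.mem_univ j)]
        · rw [DirectSum.of_eq_same, map_natCast]
          exact ZMod.natCast_rightInverse _
        · intro j' _ hne
          exact DirectSum.of_eq_of_ne _ _ _ (fun h => hne (Subtype.ext h.symm))
  -- ψ
  let φA : (aug H) →+ Additive (Abelianization H) :=
    (phi H).comp ((aug H).subtype.toAddMonoidHom)
  let ψ : (aug H) →+ ((Fin n ⊕ {i // q i = p}) → ZMod p) :=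
    ρ.comp (e.toAddMonoidHom.comp φA)
  have hψs : Function.Surjective ψ := by
    intro v
    obtain ⟨z, hz⟩ := hρs v
    obtain ⟨x, hx, hphi⟩ := phi_surj H (Additive.toMul (e.symm z))
    refine ⟨⟨x, hx⟩, ?_⟩
    show ρ (e (φA ⟨x, hx⟩)) = v
    have : φA ⟨x, hx⟩ = e.symm z := by
      show phi H x = e.symm z
      rw [hphi]; rfl
    rw [this, AddEquiv.apply_symm_apply, hz]
  have hψsemi : ∀ (c : ZG H) (x : aug H), ψ (c • x) = augE H c • ψ x := by
    intro c x
    show ρ (e (φA (c • x))) = augE H c • ρ (e (φA x))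
    have h1 : φA (c • x) = augE H c • φA x := by
      show phi H ((c • x : aug H) : ZG H) = augE H c • phi H (x : ZG H)
      have h2 : ((c • x : aug H) : ZG H) = c * (x : ZG H) := rfl
      rw [h2]
      exact phi_mul H c _ x.2
    rw [h1, map_zsmul, map_zsmul]
  have hcount := finrank_le_dAugP hH p _ ψ hψs hψsemi
  have hfr : Module.finrank (ZMod p) ((Fin n ⊕ {i // q i = p}) → ZMod p)
      = n + Fintype.card {i // q i = p} := by
    rw [Module.finrank_pi (ZMod p)]
    simp [Fintype.card_sum]
  rw [hfr] at hcount
  exact hcount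


/-- if `H` is a finitely generated nilpotent group then `gap(H) = 0`,
`ΔH` is a Swan module, and when `H/H'` is torsion free every prime is a `ΔH`-prime. -/
theorem stmt4 (H : Type) [Group H] (hH : Group.FG H) [Group.IsNilpotent H] :
    gapZ H = 0 ∧ AugSwan H ∧
      (Monoid.IsTorsionFree (Abelianization H) →
        ∀ p : ℕ, p.Prime → IsAugPrime H p) := by
  classical
  have hofsurj : Function.Surjective (Abelianization.of (G := H)) := fun a => Quot.exists_rep a
  haveI hFGab : Group.FG (Abelianization H) := Group.fg_of_surjective (hG := hH) hofsurj
  obtain ⟨n, ι0, fι0, q0, hq0, k0, ⟨E0⟩⟩ :=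
    AddCommGroup.equiv_free_prod_directSum_zmod (Additive (Abelianization H))
  haveI := fι0
  haveI : DecidableEq ι0 := Classical.decEq _
  set ι := {i : ι0 // k0 i ≠ 0} with hι
  let q : ι → ℕ := fun j => q0 j.1
  let kexp : ι → ℕ := fun j => k0 j.1
  have hq : ∀ j : ι, (q j).Prime := fun j => hq0 j.1
  have hke : ∀ j : ι, kexp j ≠ 0 := fun j => j.2
  have hsub : ∀ i : ι0, ¬ (k0 i ≠ 0) → Subsingleton (ZMod (q0 i ^ k0 i)) := by
    intro i hi
    rw [not_not.mp hi, pow_zero]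
    infer_instance
  let E : Additive (Abelianization H) ≃+ (Fin n →₀ ℤ) × ⨁ j : ι, ZMod (q j ^ kexp j) :=
    E0.trans ((AddEquiv.refl _).prodCongr
      (filterEquiv (fun i => ZMod (q0 i ^ k0 i)) (fun i => k0 i ≠ 0) hsub))
  have hAugLe : dAug H ≤ dGrp H := dAug_le_dGrp hH
  have hAugPle : ∀ p : ℕ, dAugP H p ≤ dAug H := dAugP_le_dAug hH
  have hlow : ∀ p : ℕ, p.Prime → n + Fintype.card {j : ι // q j = p} ≤ dAugP H p :=
    fun p hp => lower_bound hH n ι q kexp hq hke E p hp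
  have hgen : ∀ (k : ℕ) (slot : ι → Fin k),
      (∀ i j, q i = q j → slot i = slot j → i = j) → dGrp H ≤ n + k := by
    intro k slot hslot
    obtain ⟨u, hucard, hutop⟩ := gen_bound q kexp hq n k slot hslot
    have h1 : AddSubgroup.closure ((⇑E.symm.toAddMonoidHom) '' (u : Set _)) = ⊤ := by
      rw [← AddMonoidHom.map_closure E.symm.toAddMonoidHom, hutop]
      exact AddSubgroup.map_top_of_surjective _ E.symm.surjective
    have h2 := mult_closure_of_add _ h1
    set t : Finset (Abelianization H) :=
      u.image (fun z => Additive.toMul (E.symm.toAddMonoidHom z)) with htdef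
    have hts : (t : Set (Abelianization H))
        = Additive.toMul '' ((⇑E.symm.toAddMonoidHom) '' (u : Set _)) := by
      rw [htdef, Finset.coe_image, Set.image_image]
    have h3 : Subgroup.closure (t : Set (Abelianization H)) = ⊤ := by rw [hts]; exact h2
    calc dGrp H ≤ t.card := dGrp_le_of_abelianization_gens t h3
      _ ≤ u.card := Finset.card_image_le
      _ ≤ n + k := hucard
  have tfE : Monoid.IsTorsionFree (Abelianization H) → IsEmpty ι := by
    intro tf
    by_contra hne'
    obtain ⟨j⟩ := not_isEmpty_iff.mp hne'
    haveI : Fact (1 < q j ^ kexp j) := ⟨Nat.one_lt_pow (hke j) (hq j).one_lt⟩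
    set a : Additive (Abelianization H) :=
      E.symm (0, DirectSum.of (fun j : ι => ZMod (q j ^ kexp j)) j 1) with ha
    have hof : DirectSum.of (fun j : ι => ZMod (q j ^ kexp j)) j 1 ≠ 0 := by
      intro hz
      have h4 := congrArg (fun t => t j) hz
      simp only [DirectSum.of_eq_same] at h4
      exact one_ne_zero h4
    have hne0 : a ≠ 0 := by
      intro h0
      rw [ha, AddEquiv.map_eq_zero_iff] at h0
      exact hof (congrArg Prod.snd h0)
    have hfin : (q j ^ kexp j) • a = 0 := by
      rw [ha, ← map_nsmul, Prod.smul_def, smul_zero]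
      have h5 : (q j ^ kexp j) • DirectSum.of (fun j : ι => ZMod (q j ^ kexp j)) j 1 = 0 := by
        rw [← map_nsmul]
        have h6 : (q j ^ kexp j) • (1 : ZMod (q j ^ kexp j)) = 0 := by
          rw [nsmul_eq_mul, mul_one, ZMod.natCast_self]
        rw [h6, map_zero]
      rw [h5]
      exact map_zero _
    set g := Additive.toMul a with hg
    have hg1 : g ≠ 1 := by
      intro h
      apply hne0
      have : a = Additive.ofMul (1 : Abelianization H) := by rw [← h]; rfl
      rw [this]; rfl
    have hgfin : IsOfFinOrder g := by
      refine isOfFinOrder_iff_pow_eq_one.mpr ⟨q j ^ kexp j, pow_pos (hq j).pos _, ?_⟩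
      rw [hg, ← toMul_nsmul, hfin]
      rfl
    exact tf g hg1 hgfin
  by_cases hne : Nonempty ι
  · obtain ⟨i₀, -, hmax⟩ := Finset.exists_max_image Finset.univ
      (fun i : ι => (Finset.univ.filter fun j => q j = q i).card) Finset.univ_nonempty
    set k := (Finset.univ.filter fun j => q j = q i₀).card with hk
    obtain ⟨slot, hslot⟩ := exists_slot q k (fun i => hmax i (Finset.mem_univ i))
    have hA : dGrp H ≤ n + k := hgen k slot hslot
    have hcard : Fintype.card {j : ι // q j = q i₀} = k := Fintype.card_subtype _
    have hB : n + k ≤ dAugP H (q i₀) := by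
      have := hlow (q i₀) (hq i₀)
      rwa [hcard] at this
    have e1 : dAug H = dGrp H := le_antisymm hAugLe
      (le_trans hA (le_trans hB (hAugPle _)))
    have e2 : dAug H = dAugP H (q i₀) :=
      le_antisymm (le_trans hAugLe (le_trans hA hB)) (hAugPle _)
    refine ⟨by rw [gapZ, e1, sub_self], ⟨q i₀, hq i₀, e2⟩, ?_⟩
    intro tf p hp
    exact absurd hne (not_nonempty_iff.mpr (tfE tf))
  · haveI : IsEmpty ι := not_nonempty_iff.mp hne
    have hA : dGrp H ≤ n + 0 := hgen 0 (fun i => isEmptyElim i) (fun i => isEmptyElim i)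
    have hcard0 : ∀ p : ℕ, Fintype.card {j : ι // q j = p} = 0 := fun p =>
      Fintype.card_eq_zero
    have hB : ∀ p : ℕ, p.Prime → n ≤ dAugP H p := fun p hp => by
      have := hlow p hp
      rwa [hcard0 p, add_zero] at this
    have e1 : ∀ p : ℕ, p.Prime → dAug H = dAugP H p := fun p hp => le_antisymm
      (le_trans hAugLe (le_trans hA (le_trans (le_of_eq (add_zero n)) (hB p hp))))
      (hAugPle p)
    have e2 : dAug H = dGrp H := le_antisymm hAugLe
      (le_trans hA (le_trans (le_of_eq (add_zero n))
        (le_trans (hB 2 Nat.prime_two) (hAugPle 2))))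
    exact ⟨by rw [gapZ, e2, sub_self], ⟨2, Nat.prime_two, e1 2 Nat.prime_two⟩,
      fun _ p hp => ⟨hp, e1 p hp⟩⟩
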